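/- Let N ≥ 3 and let m be a continuous bounded function on ℝ^N with m(x) ≥ 0 everywhere, m(0) > 0, and with existing positive limit m(∞) = lim_{|x|→∞} m(x) > 0. Assume there exists a ball B(x_M, r) such that m(x) ≥ m(x_M) > 0 for all x ∈ B(x_M, r) and 0 ∉ closure(B(x_M, r)). If both m(0)/m(x_M) < r²(N−2)² / (2(r+|x_M|)²(N+1)(N+2)) and m(∞)/m(x_M) < r²(N−2)² / (2(r+|x_M|)²(N+1)(N+2)), then Λ_m < Λ_N · min(1/m(0), 1/m(∞)). -/

import Mathlib

open MeasureTheory Filter Metric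
open scoped Topology ENNReal NNReal

noncomputable section

/-- `ℝ^N` as a Euclidean space. -/
abbrev Euc (N : ℕ) : Type := EuclideanSpace ℝ (Fin N)

/-- The Dirichlet energy `∫_{ℝ^N} |∇u|² dx`. -/
def dirichlet (N : ℕ) (u : Euc N → ℝ) : ℝ := ∫ x : Euc N, ‖gradient u x‖ ^ 2

/-- The Hardy-type potential integral `∫_{ℝ^N} m(x) u(x)² / |x|² dx`. -/
def hardyInt (N : ℕ) (m u : Euc N → ℝ) : ℝ := ∫ x : Euc N, m x * u x ^ 2 / ‖x‖ ^ 2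

/-- The critical Sobolev exponent `2* = 2N/(N-2)`. -/
def critExp (N : ℕ) : ℝ := 2 * (N : ℝ) / ((N : ℝ) - 2)

/-- The optimal Hardy constant `Λ_N = ((N-2)/2)²`. -/
def hardyConst (N : ℕ) : ℝ := (((N : ℝ) - 2) / 2) ^ 2

/-- Membership in `D^{1,2}(ℝ^N)`, realized as the functions in `L^{2*}(ℝ^N)`
whose gradient is square integrable. -/
def MemD12 (N : ℕ) (u : Euc N → ℝ) : Prop :=
  MemLp u (ENNReal.ofReal (critExp N)) volume ∧
    Integrable (fun x : Euc N => ‖gradient u x‖ ^ 2) volume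

/-- The set of Rayleigh quotients defining `Λ_m`. -/
def rayleighSet (N : ℕ) (m : Euc N → ℝ) : Set ℝ :=
  { r | ∃ u : Euc N → ℝ, MemD12 N u ∧ u ≠ 0 ∧ 0 < hardyInt N m u ∧
      r = dirichlet N u / hardyInt N m u }

/-- `Λ_m`, the infimum of the Rayleigh quotients. -/
def Lambda (N : ℕ) (m : Euc N → ℝ) : ℝ := sInf (rayleighSet N m)

/-- A minimizer for `Λ_m`. -/
def IsMinimizer (N : ℕ) (m u : Euc N → ℝ) : Prop :=
  MemD12 N u ∧ u ≠ 0 ∧ 0 < hardyInt N m u ∧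
    dirichlet N u / hardyInt N m u = Lambda N m

/-- `∫_{ℝ^N} V u² dx`. -/
def potInt (N : ℕ) (V u : Euc N → ℝ) : ℝ := ∫ x : Euc N, V x * u x ^ 2

/-- `Λ_V = inf { ∫ |∇u|² : u ∈ D^{1,2}, ∫ V u² = 1 }`. -/
def lambdaV (N : ℕ) (V : Euc N → ℝ) : ℝ :=
  sInf { r | ∃ u : Euc N → ℝ, MemD12 N u ∧ potInt N V u = 1 ∧ r = dirichlet N u }

/-- Membership in the weak Lorentz space `L^{p,∞}(ℝ^N)`, via the distribution function. -/
def MemWeakLp (N : ℕ) (p : ℝ) (V : Euc N → ℝ) : Prop :=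
  Measurable V ∧ ∃ C : ℝ, 0 ≤ C ∧ ∀ s : ℝ, 0 < s →
    volume { x : Euc N | s < |V x| } ≤ ENNReal.ofReal (C / s ^ p)

/-- `V` is positive on a set of positive measure. -/
def PosOnPosMeasure (N : ℕ) (V : Euc N → ℝ) : Prop :=
  0 < volume { x : Euc N | 0 < V x }

/-- Weak convergence of a sequence in `D^{1,2}(ℝ^N)`. -/
def TendstoWeaklyD12 (N : ℕ) (u : ℕ → Euc N → ℝ) (w : Euc N → ℝ) : Prop :=
  (∀ k, MemD12 N (u k)) ∧ MemD12 N w ∧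
    ∀ φ : Euc N → ℝ, MemD12 N φ →
      Tendsto (fun k => ∫ x : Euc N, (inner ℝ (gradient (u k) x) (gradient φ x) : ℝ)) atTop
        (nhds (∫ x : Euc N, (inner ℝ (gradient w x) (gradient φ x) : ℝ)))

/-- (Sequential) weak continuity of a functional on `D^{1,2}(ℝ^N)`. -/
def WeaklyContinuousD12 (N : ℕ) (G : (Euc N → ℝ) → ℝ) : Prop :=
  ∀ (u : ℕ → Euc N → ℝ) (w : Euc N → ℝ), TendstoWeaklyD12 N u w →
    Tendsto (fun k => G (u k)) atTop (nhds (G w))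

/-- The quadratic form `Q(u) = ∫ (|∇u|² - c V u²) dx`. -/
def Qform (N : ℕ) (c : ℝ) (V u : Euc N → ℝ) : ℝ :=
  ∫ x : Euc N, (‖gradient u x‖ ^ 2 - c * V x * u x ^ 2)

/-- A test function in `C_c^∞(Ω)`. -/
def TestOn (N : ℕ) (Ω : Set (Euc N)) (φ : Euc N → ℝ) : Prop :=
  ContDiff ℝ (⊤ : ℕ∞) φ ∧ HasCompactSupport φ ∧ tsupport φ ⊆ Ω

/-- A null sequence for the quadratic form `Q(u) = ∫ (|∇u|² - c V u²)` on `C_c^∞(Ω)`: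
nonnegative test functions `v k` with `Q(v k) → 0` and `∫ ψ v k = 1` for some
fixed nonnegative test function `ψ`. -/
def NullSeqOn (N : ℕ) (Ω : Set (Euc N)) (c : ℝ) (V : Euc N → ℝ) (v : ℕ → Euc N → ℝ) : Prop :=
  (∀ k, TestOn N Ω (v k) ∧ ∀ x, 0 ≤ v k x) ∧
  (∃ ψ : Euc N → ℝ, TestOn N Ω ψ ∧ (∀ x, 0 ≤ ψ x) ∧ ∀ k, ∫ x : Euc N, ψ x * v k x = 1) ∧
  Tendsto (fun k => Qform N c V (v k)) atTop (nhds 0)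

/-- `u` is a weak solution of `-Δu = c V u` in `Ω`, tested against `C_c^∞(Ω)`. -/
def WeakSolutionOn (N : ℕ) (Ω : Set (Euc N)) (c : ℝ) (V u : Euc N → ℝ) : Prop :=
  ∀ φ : Euc N → ℝ, TestOn N Ω φ →
    ∫ x : Euc N, (inner ℝ (gradient u x) (gradient φ x) : ℝ) = c * ∫ x : Euc N, V x * u x * φ x

/-- Weak convergence in `H¹_loc(ℝ^N)`, tested against smooth compactly supported functions. -/
def ConvergesLocallyWeakly (N : ℕ) (v : ℕ → Euc N → ℝ) (w : Euc N → ℝ) : Prop :=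
  ∀ φ : Euc N → ℝ, ContDiff ℝ (⊤ : ℕ∞) φ → HasCompactSupport φ →
    Tendsto (fun k => ∫ x : Euc N, v k x * φ x) atTop (nhds (∫ x : Euc N, w x * φ x)) ∧
    Tendsto (fun k => ∫ x : Euc N, (inner ℝ (gradient (v k) x) (gradient φ x) : ℝ)) atTop
      (nhds (∫ x : Euc N, (inner ℝ (gradient w x) (gradient φ x) : ℝ)))

/-- A generalized ground state on `Ω` of the form `Q(u) = ∫ (|∇u|² - c V u²)`:
a positive weak solution of `-Δw = c V w` to which some null sequence converges
weakly in `H¹_loc`. -/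
def GroundStateOn (N : ℕ) (Ω : Set (Euc N)) (c : ℝ) (V w : Euc N → ℝ) : Prop :=
  (∀ x ∈ Ω, 0 < w x) ∧ WeakSolutionOn N Ω c V w ∧
    ∃ v : ℕ → Euc N → ℝ, NullSeqOn N Ω c V v ∧ ConvergesLocallyWeakly N v w

/-- The capacity of a set `K ⊆ ℝ^N`. -/
def capacity (N : ℕ) (K : Set (Euc N)) : ℝ :=
  sInf { r | ∃ u : Euc N → ℝ, ContDiff ℝ (⊤ : ℕ∞) u ∧ HasCompactSupport u ∧
      (∀ x ∈ K, 1 ≤ u x) ∧ r = dirichlet N u }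

/-- A set `Z ⊆ ℝ^N` has capacity zero if every compact subset has capacity zero. -/
def CapacityZero (N : ℕ) (Z : Set (Euc N)) : Prop :=
  ∀ K ⊆ Z, IsCompact K → capacity N K = 0

section Aux
open scoped RealInnerProductSpace

variable {E : Type*} [NormedAddCommGroup E] [InnerProductSpace ℝ E]

lemma my_hasFDerivAt_norm (y : E) (hy : y ≠ 0) :
    HasFDerivAt (fun z : E => ‖z‖) (‖y‖⁻¹ • (innerSL ℝ y)) y := by
  have h1 : HasFDerivAt (fun z : E => ⟪z, z⟫)
      ((fderivInnerCLM ℝ (y, y)).comp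
        ((ContinuousLinearMap.id ℝ E).prod (ContinuousLinearMap.id ℝ E))) y :=
    (hasFDerivAt_id y).inner ℝ (hasFDerivAt_id y)
  have hyy : ⟪y, y⟫ ≠ 0 := by
    simpa [real_inner_self_eq_norm_sq] using pow_ne_zero 2 (norm_ne_zero_iff.2 hy)
  have h2 := HasDerivAt.comp_hasFDerivAt (f := fun z : E => ⟪z, z⟫) y
    (Real.hasDerivAt_sqrt hyy) h1
  have heq : ((fun x => Real.sqrt x) ∘ fun z : E => ⟪z, z⟫) = fun z : E => ‖z‖ := by
    funext z; simp only [Function.comp_apply]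
    rw [real_inner_self_eq_norm_sq]; exact Real.sqrt_sq (norm_nonneg z)
  rw [heq] at h2
  refine h2.congr_fderiv ?_
  ext v
  have hn : Real.sqrt ⟪y, y⟫ = ‖y‖ := by
    rw [real_inner_self_eq_norm_sq]; exact Real.sqrt_sq (norm_nonneg y)
  simp [hn, real_inner_comm y v]
  ring

end Aux

set_option maxHeartbeats 1000000 in
/-- Proposition 2.7: a sufficient condition on a local maximum of `m`
for the strict inequality `Λ_m < Λ_N · min(1/m(0), 1/m(∞))`. -/
theorem statement6 (N : ℕ) (hN : 3 ≤ N) (m : Euc N → ℝ)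
    (hm_cont : Continuous m) (hm_bdd : ∃ C : ℝ, ∀ x, |m x| ≤ C)
    (hm_nonneg : ∀ x, 0 ≤ m x) (hm0_pos : 0 < m 0)
    (minf : ℝ) (hminf : Tendsto m (cocompact (Euc N)) (nhds minf)) (hminf_pos : 0 < minf)
    (xM : Euc N) (r : ℝ) (hr : 0 < r)
    (hball : ∀ x ∈ ball xM r, m xM ≤ m x) (hxM_pos : 0 < m xM)
    (h0ball : (0 : Euc N) ∉ closure (ball xM r))
    (h1 : m 0 / m xM <
      r ^ 2 * ((N : ℝ) - 2) ^ 2 / (2 * (r + ‖xM‖) ^ 2 * ((N : ℝ) + 1) * ((N : ℝ) + 2)))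
    (h2 : minf / m xM <
      r ^ 2 * ((N : ℝ) - 2) ^ 2 / (2 * (r + ‖xM‖) ^ 2 * ((N : ℝ) + 1) * ((N : ℝ) + 2))) :
    Lambda N m < hardyConst N * min (1 / m 0) (1 / minf) := by
  classical
  obtain ⟨n, rfl⟩ : ∃ n : ℕ, N = n + 3 := ⟨N - 3, by omega⟩
  haveI : Nonempty (Fin (n+3)) := ⟨⟨0, by omega⟩⟩
  haveI : Nontrivial (Euc (n+3)) := by
    refine ⟨EuclideanSpace.single ⟨0, by omega⟩ 1, 0, fun h => ?_⟩
    have := congrArg (fun v : Euc (n+3) => v ⟨0, by omega⟩) h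
    simp [EuclideanSpace.single] at this
  obtain ⟨C, hC⟩ := hm_bdd
  have hC0 : 0 ≤ C := le_trans (abs_nonneg _) (hC 0)
  set R : ℝ := r + ‖xM‖ with hRdef
  have hrxM : r < ‖xM‖ := by
    by_contra h
    push_neg at h
    apply h0ball
    rw [closure_ball xM hr.ne']
    simpa [mem_closedBall, dist_zero_left] using h
  have hR : 0 < R := by positivity
  set d : ℝ := ‖xM‖ - r with hddef
  have hd : 0 < d := by simp [hddef]; linarith
  -- the test function
  set u : Euc (n+3) → ℝ := fun x => max (1 - ‖x - xM‖ / r) 0 with hudef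
  have hu_nonneg : ∀ x, 0 ≤ u x := fun x => le_max_right _ _
  have hu_le_one : ∀ x, u x ≤ 1 := by
    intro x
    apply max_le _ zero_le_one
    have : 0 ≤ ‖x - xM‖ / r := by positivity
    linarith
  have huzero : ∀ x : Euc (n+3), r ≤ ‖x - xM‖ → u x = 0 := by
    intro x hx
    apply max_eq_right
    have : 1 ≤ ‖x - xM‖ / r := (one_le_div hr).2 hx
    linarith
  have huball : ∀ x : Euc (n+3), x ∈ ball xM r → u x = 1 - ‖x - xM‖ / r := by
    intro x hx
    apply max_eq_left
    rw [mem_ball, dist_eq_norm] at hx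
    have : ‖x - xM‖ / r < 1 := (div_lt_one hr).2 hx
    linarith
  have hu_cont : Continuous u := by
    apply Continuous.max _ continuous_const
    exact continuous_const.sub (((continuous_id.sub continuous_const).norm).div_const r)
  have hu_supp : HasCompactSupport u := by
    apply HasCompactSupport.intro (isCompact_closedBall xM r)
    intro x hx
    rw [mem_closedBall, dist_eq_norm, not_le] at hx
    exact huzero x hx.le
  -- gradient vs fderiv
  have hgrad_eq : ∀ (v : Euc (n+3) → ℝ) (x : Euc (n+3)), ‖gradient v x‖ = ‖fderiv ℝ v x‖ := by
    intro v x
    rw [gradient]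
    exact LinearIsometryEquiv.norm_map _ _
  -- derivative inside the ball, away from the center
  have hball_deriv : ∀ x : Euc (n+3), x ∈ ball xM r → x ≠ xM → ‖fderiv ℝ u x‖ = r⁻¹ := by
    intro x hx hne
    have hxs : x - xM ≠ 0 := sub_ne_zero.2 hne
    have hd1 : HasFDerivAt (fun z : Euc (n+3) => z - xM) (ContinuousLinearMap.id ℝ (Euc (n+3))) x :=
      (hasFDerivAt_id x).sub_const xM
    have hd2 := (my_hasFDerivAt_norm (x - xM) hxs).comp x hd1
    have hd3 := (hd2.const_mul r⁻¹).const_sub 1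
    have hev : (fun z : Euc (n+3) => 1 - r⁻¹ * (((fun z : Euc (n+3) => ‖z‖) ∘ fun z : Euc (n+3) => z - xM) z)) =ᶠ[𝓝 x] u := by
      filter_upwards [isOpen_ball.mem_nhds hx] with z hz
      simp only [Function.comp_apply]
      rw [huball z hz, inv_mul_eq_div]
    have hd4 := hd3.congr_of_eventuallyEq hev.symm
    rw [hd4.fderiv]
    rw [norm_neg]
    rw [ContinuousLinearMap.comp_id]
    rw [norm_smul, norm_smul]
    rw [innerSL_apply_norm]
    simp [Real.norm_eq_abs, abs_of_pos hr, abs_of_nonneg (inv_nonneg.2 (norm_nonneg (x - xM))),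
      inv_mul_cancel₀ (norm_ne_zero_iff.2 hxs)]
  -- derivative outside the closed ball
  have houter_deriv : ∀ x : Euc (n+3), r < ‖x - xM‖ → fderiv ℝ u x = 0 := by
    intro x hx
    have hopen : IsOpen {z : Euc (n+3) | r < ‖z - xM‖} :=
      isOpen_lt continuous_const ((continuous_id.sub continuous_const).norm)
    have hev : u =ᶠ[𝓝 x] (fun _ => (0 : ℝ)) := by
      filter_upwards [hopen.mem_nhds hx] with z hz
      exact huzero z (le_of_lt hz)
    rw [hev.fderiv_eq, fderiv_fun_const]
    rfl
  -- a.e. identification of the squared gradient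
  have hae : (fun x : Euc (n+3) => ‖fderiv ℝ u x‖ ^ 2)
      =ᵐ[volume] (ball xM r).indicator (fun _ => r⁻¹ ^ 2) := by
    have hnull : volume (sphere xM r ∪ {xM} : Set (Euc (n+3))) = 0 := by
      apply measure_union_null
      · exact Measure.addHaar_sphere_of_ne_zero volume xM hr.ne'
      · exact measure_singleton xM
    filter_upwards [measure_eq_zero_iff_ae_notMem.1 hnull] with x hx
    rw [Set.mem_union, not_or] at hx
    obtain ⟨hxs, hxc⟩ := hx
    rcases lt_trichotomy (‖x - xM‖) r with h | h | h
    · have hxball : x ∈ ball xM r := by rwa [mem_ball, dist_eq_norm]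
      have hxne : x ≠ xM := by
        intro h'
        subst h'
        exact hxc rfl
      rw [hball_deriv x hxball hxne, Set.indicator_of_mem hxball]
    · exact absurd (by rwa [mem_sphere_iff_norm]) hxs
    · have : x ∉ ball xM r := by
        rw [mem_ball, dist_eq_norm]; linarith
      rw [houter_deriv x h, Set.indicator_of_notMem this]
      simp

  -- integrability of the squared gradient
  have hind_int : Integrable ((ball xM r).indicator (fun _ => r⁻¹ ^ 2) : Euc (n+3) → ℝ) volume := by
    rw [integrable_indicator_iff measurableSet_ball]
    exact integrableOn_const measure_ball_lt_top.ne
  have hgrad_int : Integrable (fun x : Euc (n+3) => ‖gradient u x‖ ^ 2) volume := by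
    have h := hind_int.congr hae.symm
    simpa only [hgrad_eq] using h
  -- value of the Dirichlet energy
  set ω : ℝ := (volume (ball (0 : Euc (n+3)) 1)).toReal with hωdef
  have hωpos : 0 < ω := by
    rw [hωdef]
    exact ENNReal.toReal_pos (measure_ball_pos volume _ one_pos).ne' measure_ball_lt_top.ne
  have hvol : (volume (ball xM r)).toReal = r ^ (n+3) * ω := by
    rw [Measure.addHaar_ball volume xM hr.le, ENNReal.toReal_mul,
      ENNReal.toReal_ofReal (by positivity)]
    congr 2
    simp [finrank_euclideanSpace_fin]
  have hD : dirichlet (n+3) u = r ^ (n+3) * ω * r⁻¹ ^ 2 := by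
    rw [dirichlet]
    simp only [hgrad_eq]
    rw [integral_congr_ae hae, integral_indicator_const, smul_eq_mul, measureReal_def, hvol]
    exact measurableSet_ball
  -- the mass of u²
  set g : ℝ → ℝ := fun t => max (1 - t / r) 0 ^ 2 with hgdef
  have hg_cont : Continuous g := by
    apply Continuous.pow
    exact (continuous_const.sub ((continuous_id.div_const r))).max continuous_const
  have hS1 : ∫ x : Euc (n+3), u x ^ 2 = ∫ x : Euc (n+3), g ‖x‖ := by
    have : (fun x : Euc (n+3) => u x ^ 2) = fun x => (fun y : Euc (n+3) => g ‖y‖) (x - xM) := rfl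
    rw [this]
    exact integral_sub_right_eq_self (fun y : Euc (n+3) => g ‖y‖) xM
  have hS2 : ∫ x : Euc (n+3), g ‖x‖
      = (n+3 : ℕ) • (ω • ∫ y in Set.Ioi (0:ℝ), y ^ (n+2) • g y) := by
    have h := MeasureTheory.integral_fun_norm_addHaar (volume : Measure (Euc (n+3))) g
    simp only [finrank_euclideanSpace_fin] at h
    rw [hωdef]
    convert h using 3
    rfl
    rfl
  have hF0 : ∀ y ∈ Set.Ioi r, y ^ (n+2) * g y = 0 := by
    intro y hy
    have hmax : max (1 - y / r) 0 = 0 := by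
      have h1y : (1:ℝ) ≤ y / r := (one_le_div hr).2 (le_of_lt hy)
      exact max_eq_right (by linarith)
    have : g y = 0 := by simp [hgdef, hmax]
    simp [this]
  have hIoir : ∫ y in Set.Ioi r, y ^ (n+2) * g y = 0 := by
    rw [setIntegral_congr_fun measurableSet_Ioi hF0]
    simp
  have hInt1 : IntegrableOn (fun y => y ^ (n+2) * g y) (Set.Ioc 0 r) volume :=
    ((continuous_pow (n+2)).mul hg_cont).integrableOn_Ioc
  have hInt2 : IntegrableOn (fun y => y ^ (n+2) * g y) (Set.Ioi r) volume := by
    rw [integrableOn_congr_fun hF0 measurableSet_Ioi]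
    exact integrableOn_zero
  have hIval : ∫ y in Set.Ioc (0:ℝ) r, y ^ (n+2) * g y
      = 2 * r ^ (n+3) / (((n:ℝ)+3) * ((n:ℝ)+4) * ((n:ℝ)+5)) := by
    have hcongr : ∫ y in Set.Ioc (0:ℝ) r, y ^ (n+2) * g y
        = ∫ y in Set.Ioc (0:ℝ) r,
            (y ^ (n+2) - (2/r) * y ^ (n+3) + (1/r^2) * y ^ (n+4)) := by
      apply setIntegral_congr_fun measurableSet_Ioc
      intro y hy
      obtain ⟨hy0, hyr⟩ := hy
      have h0 : (0:ℝ) ≤ 1 - y / r := by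
        have : y / r ≤ 1 := (div_le_one hr).2 hyr
        linarith
      simp only [hgdef, max_eq_left h0]
      field_simp
      ring
    rw [hcongr, ← intervalIntegral.integral_of_le hr.le]
    have e1 : IntervalIntegrable (fun y : ℝ => y ^ (n+2)) volume 0 r :=
      intervalIntegral.intervalIntegrable_pow _
    have e2 : IntervalIntegrable (fun y : ℝ => (2/r) * y ^ (n+3)) volume 0 r :=
      (intervalIntegral.intervalIntegrable_pow _).const_mul _
    have e3 : IntervalIntegrable (fun y : ℝ => (1/r^2) * y ^ (n+4)) volume 0 r :=
      (intervalIntegral.intervalIntegrable_pow _).const_mul _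
    rw [intervalIntegral.integral_add (e1.sub e2) e3, intervalIntegral.integral_sub e1 e2,
      intervalIntegral.integral_const_mul, intervalIntegral.integral_const_mul,
      integral_pow, integral_pow, integral_pow]
    push_cast
    have hrne : r ≠ 0 := hr.ne'
    field_simp
    ring
  have hIoi : ∫ y in Set.Ioi (0:ℝ), y ^ (n+2) * g y
      = 2 * r ^ (n+3) / (((n:ℝ)+3) * ((n:ℝ)+4) * ((n:ℝ)+5)) := by
    rw [← Set.Ioc_union_Ioi_eq_Ioi hr.le,
      setIntegral_union (Set.Ioc_disjoint_Ioi le_rfl) measurableSet_Ioi hInt1 hInt2,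
      hIoir, hIval, add_zero]
  have hS : ∫ x : Euc (n+3), u x ^ 2 = 2 * ω * r ^ (n+3) / (((n:ℝ)+4) * ((n:ℝ)+5)) := by
    rw [hS1, hS2]
    simp only [smul_eq_mul, nsmul_eq_mul]
    rw [hIoi]
    push_cast
    have h3 : ((n:ℝ)+3) ≠ 0 := by positivity
    have h4 : ((n:ℝ)+4) ≠ 0 := by positivity
    have h5 : ((n:ℝ)+5) ≠ 0 := by positivity
    field_simp
  have hSpos : 0 < ∫ x : Euc (n+3), u x ^ 2 := by
    rw [hS]
    apply div_pos
    · have := pow_pos hr (n+3)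
      nlinarith
    · positivity
  -- integrability of u²
  have hu2_supp : HasCompactSupport (fun x : Euc (n+3) => u x ^ 2) :=
    HasCompactSupport.comp_left (g := fun t : ℝ => t ^ 2) hu_supp (by simp)
  have hI_u2 : Integrable (fun x : Euc (n+3) => u x ^ 2) volume :=
    (hu_cont.pow 2).integrable_of_hasCompactSupport hu2_supp
  -- integrability of the Hardy integrand
  have hmeas_hardy : AEStronglyMeasurable (fun x : Euc (n+3) => m x * u x ^ 2 / ‖x‖ ^ 2) volume :=
    (((hm_cont.mul (hu_cont.pow 2)).measurable).div
      ((continuous_norm.pow 2).measurable)).aestronglyMeasurable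
  have hI_hardy : Integrable (fun x : Euc (n+3) => m x * u x ^ 2 / ‖x‖ ^ 2) volume := by
    have hgint : Integrable ((closedBall xM r).indicator (fun _ => C / d ^ 2) : Euc (n+3) → ℝ)
        volume := by
      rw [integrable_indicator_iff measurableSet_closedBall]
      exact integrableOn_const measure_closedBall_lt_top.ne
    apply hgint.mono' hmeas_hardy
    apply ae_of_all
    intro x
    by_cases hx : x ∈ closedBall xM r
    · rw [Set.indicator_of_mem hx]
      have hxr : ‖x - xM‖ ≤ r := by rwa [mem_closedBall, dist_eq_norm] at hx
      have hxd : d ≤ ‖x‖ := by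
        have h' := norm_sub_norm_le xM x
        rw [norm_sub_rev xM x] at h'
        simp only [hddef]
        linarith
      rw [Real.norm_eq_abs, abs_div, abs_of_nonneg (pow_nonneg (norm_nonneg x) 2)]
      apply div_le_div₀ hC0 _ (pow_pos hd 2) _
      · rw [abs_mul, abs_of_nonneg (sq_nonneg (u x))]
        have h1' : |m x| * u x ^ 2 ≤ C * 1 :=
          mul_le_mul (hC x) (by nlinarith [hu_le_one x, hu_nonneg x]) (sq_nonneg _) hC0
        linarith
      · nlinarith [hxd, hd]
    · rw [Set.indicator_of_notMem hx]
      have hx' : r ≤ ‖x - xM‖ := by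
        rw [mem_closedBall, dist_eq_norm, not_le] at hx
        exact hx.le
      rw [huzero x hx']
      have : (0:ℝ) ≤ C / d ^ 2 := div_nonneg hC0 (pow_nonneg hd.le 2)
      simpa using this
  -- pointwise comparison
  have hpt : (fun x : Euc (n+3) => m xM * u x ^ 2 / R ^ 2)
      ≤ fun x : Euc (n+3) => m x * u x ^ 2 / ‖x‖ ^ 2 := by
    intro x
    show m xM * u x ^ 2 / R ^ 2 ≤ m x * u x ^ 2 / ‖x‖ ^ 2
    rcases lt_or_ge ‖x - xM‖ r with h | h
    · have hxball : x ∈ ball xM r := by rwa [mem_ball, dist_eq_norm]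
      have hm_le : m xM ≤ m x := hball x hxball
      have hxd : d ≤ ‖x‖ := by
        have h' := norm_sub_norm_le xM x
        rw [norm_sub_rev xM x] at h'
        simp only [hddef]
        linarith
      have hx0 : 0 < ‖x‖ := lt_of_lt_of_le hd hxd
      have hxR : ‖x‖ ≤ R := by
        have h'' : ‖x‖ ≤ ‖x - xM‖ + ‖xM‖ := by
          simpa [sub_add_cancel] using norm_add_le (x - xM) xM
        simp only [hRdef]
        linarith
      exact div_le_div₀ (mul_nonneg (hm_nonneg x) (sq_nonneg _))
        (mul_le_mul_of_nonneg_right hm_le (sq_nonneg _)) (pow_pos hx0 2)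
        (pow_le_pow_left₀ (norm_nonneg x) hxR 2)
    · rw [huzero x h]
      simp
  have hI_low : Integrable (fun x : Euc (n+3) => m xM * u x ^ 2 / R ^ 2) volume := by
    have h := (hI_u2.const_mul (m xM)).div_const (R ^ 2)
    simpa using h
  have hHlow : m xM / R ^ 2 * (∫ x : Euc (n+3), u x ^ 2) ≤ hardyInt (n+3) m u := by
    have hmono := integral_mono hI_low hI_hardy hpt
    rw [hardyInt]
    calc m xM / R ^ 2 * ∫ x : Euc (n+3), u x ^ 2
        = ∫ x : Euc (n+3), m xM * u x ^ 2 / R ^ 2 := by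
          rw [show (fun x : Euc (n+3) => m xM * u x ^ 2 / R ^ 2)
              = fun x : Euc (n+3) => (m xM / R ^ 2) • (u x ^ 2) from
            funext fun x => by rw [smul_eq_mul]; ring, integral_smul, smul_eq_mul]
      _ ≤ _ := hmono
  have hlowpos : 0 < m xM / R ^ 2 * ∫ x : Euc (n+3), u x ^ 2 :=
    mul_pos (div_pos hxM_pos (pow_pos hR 2)) hSpos
  have hHpos : 0 < hardyInt (n+3) m u := lt_of_lt_of_le hlowpos hHlow
  -- membership in the Rayleigh set
  have hune : u ≠ 0 := by
    intro h
    have h1' : u xM = 0 := by rw [h]; rfl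
    rw [hudef] at h1'
    simp at h1'
  have hmemD : MemD12 (n+3) u := by
    constructor
    · apply hu_supp.memLp_of_bound hu_cont.aestronglyMeasurable 1
      apply ae_of_all
      intro x
      rw [Real.norm_eq_abs, abs_of_nonneg (hu_nonneg x)]
      exact hu_le_one x
    · exact hgrad_int
  have hmem : dirichlet (n+3) u / hardyInt (n+3) m u ∈ rayleighSet (n+3) m :=
    ⟨u, hmemD, hune, hHpos, rfl⟩
  have hbdd : BddBelow (rayleighSet (n+3) m) := by
    refine ⟨0, fun t ht => ?_⟩
    obtain ⟨v, _, _, hv3, rfl⟩ := ht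
    exact div_nonneg (integral_nonneg fun x => sq_nonneg _) hv3.le
  have hLam : Lambda (n+3) m ≤ dirichlet (n+3) u / hardyInt (n+3) m u := csInf_le hbdd hmem
  -- the key quotient bound
  set A : ℝ := ((n:ℝ)+4) * ((n:ℝ)+5) * R ^ 2 / (2 * r ^ 2 * m xM) with hAdef
  have hq : dirichlet (n+3) u / hardyInt (n+3) m u ≤ A := by
    have hle : dirichlet (n+3) u / hardyInt (n+3) m u
        ≤ dirichlet (n+3) u / (m xM / R ^ 2 * ∫ x : Euc (n+3), u x ^ 2) := by
      apply div_le_div_of_nonneg_left _ hlowpos hHlow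
      rw [hD]
      positivity
    refine le_trans hle (le_of_eq ?_)
    rw [hD, hS, hAdef]
    have h4 : ((n:ℝ)+4) ≠ 0 := by positivity
    have h5 : ((n:ℝ)+5) ≠ 0 := by positivity
    have hωne : ω ≠ 0 := hωpos.ne'
    have hrne : r ≠ 0 := hr.ne'
    have hRne : R ≠ 0 := hR.ne'
    have hmne : m xM ≠ 0 := hxM_pos.ne'
    field_simp
  -- arithmetic: A < Λ_N / m(0) and A < Λ_N / m(∞)
  have key : ∀ M0 : ℝ, 0 < M0 →
      M0 / m xM < r ^ 2 * (((n+3 : ℕ) : ℝ) - 2) ^ 2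
        / (2 * R ^ 2 * (((n+3 : ℕ) : ℝ) + 1) * (((n+3 : ℕ) : ℝ) + 2)) →
      A < hardyConst (n+3) * (1 / M0) := by
    intro M0 hM0 hlt
    have hden : (0:ℝ) < 2 * R ^ 2 * (((n+3 : ℕ) : ℝ) + 1) * (((n+3 : ℕ) : ℝ) + 2) := by
      have hp2 := pow_pos hR 2
      have hc1 : (0:ℝ) < ((n+3 : ℕ) : ℝ) + 1 := by positivity
      have hc2 : (0:ℝ) < ((n+3 : ℕ) : ℝ) + 2 := by positivity
      exact mul_pos (mul_pos (mul_pos two_pos hp2) hc1) hc2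
    rw [div_lt_div_iff₀ hxM_pos hden] at hlt
    rw [hardyConst, hAdef, mul_one_div, div_lt_div_iff₀ (by positivity) hM0]
    push_cast at hlt ⊢
    ring_nf at hlt ⊢
    linarith [hlt]
  have hA1 : A < hardyConst (n+3) * (1 / m 0) := key (m 0) hm0_pos h1
  have hA2 : A < hardyConst (n+3) * (1 / minf) := key minf hminf_pos h2
  have hmin : A < hardyConst (n+3) * min (1 / m 0) (1 / minf) := by
    have hc : 0 ≤ hardyConst (n+3) := sq_nonneg _
    rcases min_choice (1 / m 0) (1 / minf) with h | h <;> rw [h]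
    · exact hA1
    · exact hA2
  calc Lambda (n+3) m ≤ dirichlet (n+3) u / hardyInt (n+3) m u := hLam
    _ ≤ A := hq
    _ < _ := hmin
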